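/- Let p be a fixed point of the migration dynamics such that some connected component C of the subgraph induced by the active types {v : p_v > 0} has |C| > 1 (all types in C have equal positive mass). If F'_{uv}(0) > 0 for all edges uv, then the Jacobian of g at p has an eigenvalue of absolute value strictly greater than 1. -/

import Mathlib

open Polynomial Matrix Finset Filter Set Topology

lemma aux_deriv_nonneg {f : ℝ → ℝ} {f' z : ℝ}
    (hd : HasDerivAt f f' z) (hm : MonotoneOn f (Set.Icc (-1:ℝ) 1))
    (h1 : -1 < z) (h2 : z < 1) : 0 ≤ f' := by
  have hle : 𝓝[Set.Ioo z 1] z ≤ 𝓝[≠] z :=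
    nhdsWithin_mono z (fun t ht => ne_of_gt ht.1)
  have ht : Tendsto (slope f z) (𝓝[Set.Ioo z 1] z) (𝓝 f') :=
    (hasDerivAt_iff_tendsto_slope.mp hd).mono_left hle
  have : NeBot (𝓝[Set.Ioo z 1] z) := left_nhdsWithin_Ioo_neBot h2
  refine ge_of_tendsto ht ?_
  filter_upwards [self_mem_nhdsWithin] with t ht
  have hz : z ∈ Set.Icc (-1:ℝ) 1 := ⟨h1.le, h2.le⟩
  have htm : t ∈ Set.Icc (-1:ℝ) 1 := ⟨by linarith [ht.1, h1], ht.2.le⟩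
  have := hm hz htm ht.1.le
  rw [slope_def_field]
  exact div_nonneg (by linarith) (by linarith [ht.1])

lemma aux_pos {f : ℝ → ℝ} {f'0 : ℝ}
    (hd : HasDerivAt f f'0 0) (h0 : f 0 = 0)
    (hm : MonotoneOn f (Set.Icc (-1:ℝ) 1)) (hF' : 0 < f'0)
    {z : ℝ} (hz0 : 0 < z) (hz1 : z ≤ 1) : 0 < f z := by
  have hle : 𝓝[Set.Ioo 0 z] (0:ℝ) ≤ 𝓝[≠] 0 :=
    nhdsWithin_mono 0 (fun t ht => ne_of_gt ht.1)
  have ht : Tendsto (slope f 0) (𝓝[Set.Ioo 0 z] 0) (𝓝 f'0) :=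
    (hasDerivAt_iff_tendsto_slope.mp hd).mono_left hle
  have : NeBot (𝓝[Set.Ioo 0 z] (0:ℝ)) := left_nhdsWithin_Ioo_neBot hz0
  have hev : ∀ᶠ t in 𝓝[Set.Ioo 0 z] (0:ℝ), 0 < slope f 0 t :=
    ht.eventually (eventually_gt_nhds hF')
  obtain ⟨t, hts, htm⟩ := (hev.and self_mem_nhdsWithin).exists
  have hft : 0 < f t := by
    rw [slope_def_field, h0, sub_zero, sub_zero] at hts
    have := mul_pos hts htm.1
    rwa [div_mul_cancel₀] at this
    exact ne_of_gt htm.1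
  have : f t ≤ f z :=
    hm ⟨by linarith [htm.1], by linarith [htm.2]⟩ ⟨by linarith, hz1⟩ htm.2.le
  linarith

lemma aux_root_mem_spectrum {m : Type*} [Fintype m] [DecidableEq m]
    (A : Matrix m m ℂ) (μ : ℂ) (h : A.charpoly.IsRoot μ) : μ ∈ spectrum ℂ A := by
  rw [spectrum.mem_iff]
  intro hU
  rw [Matrix.isUnit_iff_isUnit_det, isUnit_iff_ne_zero] at hU
  apply hU
  have hmap : (charmatrix A).map (Polynomial.evalRingHom μ) = algebraMap ℂ (Matrix m m ℂ) μ - A := by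
    ext i j
    by_cases hij : i = j
    · subst hij
      simp [charmatrix_apply, Matrix.algebraMap_matrix_apply]
    · simp [charmatrix_apply, Matrix.algebraMap_matrix_apply, hij, Matrix.diagonal_apply_ne _ hij]
  calc (algebraMap ℂ (Matrix m m ℂ) μ - A).det
      = ((charmatrix A).map (Polynomial.evalRingHom μ)).det := by rw [hmap]
    _ = Polynomial.evalRingHom μ (charmatrix A).det := ((Polynomial.evalRingHom μ).map_det _).symm
    _ = 0 := h

lemma aux_exists_big_root {m : Type*} [Fintype m] [DecidableEq m]
    (A : Matrix m m ℂ) (h : (Fintype.card m : ℝ) < ‖A.trace‖) :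
    ∃ μ : ℂ, A.charpoly.IsRoot μ ∧ 1 < ‖μ‖ := by
  by_contra hc
  push_neg at hc
  have htr : A.trace = A.charpoly.roots.sum := Matrix.trace_eq_sum_roots_charpoly A
  have hcard : Multiset.card A.charpoly.roots = Fintype.card m := by
    rw [(Polynomial.splits_iff_card_roots).mp (IsAlgClosed.splits A.charpoly),
      Matrix.charpoly_natDegree_eq_dim]
  have hne : A.charpoly ≠ 0 := A.charpoly_monic.ne_zero
  have hb : ‖A.trace‖ ≤ (Fintype.card m : ℝ) := by
    rw [htr]
    calc ‖A.charpoly.roots.sum‖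
        ≤ (A.charpoly.roots.map norm).sum := by
          simpa using norm_multiset_sum_le A.charpoly.roots
      _ ≤ Multiset.card (A.charpoly.roots.map norm) • (1:ℝ) := by
          apply Multiset.sum_le_card_nsmul
          intro x hx
          obtain ⟨μ, hμ, rfl⟩ := Multiset.mem_map.mp hx
          exact hc μ ((Polynomial.mem_roots hne).mp hμ)
      _ = (Fintype.card m : ℝ) := by
          rw [Multiset.card_map, hcard]; simp
  linarith


theorem stmt_7 {n : ℕ} (G : SimpleGraph (Fin n)) [DecidableRel G.Adj]
    (F F' : Fin n → Fin n → ℝ → ℝ)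
    (hderiv : ∀ u v z, HasDerivAt (F u v) (F' u v z) z)
    (hsym : ∀ u v, F u v = F v u)
    (hodd : ∀ u v z, F u v (-z) = -(F u v z))
    (h0 : ∀ u v, F u v 0 = 0)
    (hmono : ∀ u v, MonotoneOn (F u v) (Set.Icc (-1 : ℝ) 1))
    (hF'0 : ∀ u v, 0 < F' u v 0)
    (p : Fin n → ℝ) (hp0 : ∀ v, 0 ≤ p v) (hp1 : ∑ v, p v = 1)
    (hfix : ∀ u, p u + ∑ v ∈ G.neighborFinset u, p u * p v * F u v (p u - p v) = p u)
    (hedge : ∃ u v, G.Adj u v ∧ 0 < p u ∧ 0 < p v)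
    (J : Matrix (Fin n) (Fin n) ℝ)
    (hJ : ∀ u v, J u v =
      if u = v then
        1 + ∑ w ∈ G.neighborFinset u, p w * (F u w (p u - p w) + p u * F' u w (p u - p w))
      else if G.Adj u v then
        p u * (F u v (p u - p v) - p v * F' u v (p u - p v))
      else 0) :
    ∃ μ : ℂ, μ ∈ spectrum ℂ (J.map (Complex.ofReal)) ∧ 1 < ‖μ‖ := by

  classical
  -- basic facts
  have hple1 : ∀ u, p u ≤ 1 := by
    intro u
    rw [← hp1]
    exact Finset.single_le_sum (fun v _ => hp0 v) (Finset.mem_univ u)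
  have hFnn : ∀ u v z, 0 ≤ z → z ≤ 1 → 0 ≤ F u v z := by
    intro u v z h1 h2
    have := (hmono u v) (Set.mem_Icc.mpr ⟨by norm_num, by norm_num⟩)
      (Set.mem_Icc.mpr ⟨by linarith, h2⟩) h1
    rwa [h0] at this
  have hFpos : ∀ u v z, 0 < z → z ≤ 1 → 0 < F u v z := fun u v z h1 h2 =>
    aux_pos (hderiv u v 0) (h0 u v) (hmono u v) (hF'0 u v) h1 h2
  -- fixed point identity
  have hfix' : ∀ u, 0 < p u →
      ∑ w ∈ G.neighborFinset u, p w * F u w (p u - p w) = 0 := by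
    intro u hu
    have h1 : ∑ w ∈ G.neighborFinset u, p u * p w * F u w (p u - p w) = 0 := by
      have := hfix u; linarith
    rw [show (∑ w ∈ G.neighborFinset u, p u * p w * F u w (p u - p w))
        = p u * ∑ w ∈ G.neighborFinset u, p w * F u w (p u - p w) by
      rw [Finset.mul_sum]; apply Finset.sum_congr rfl; intro w _; ring] at h1
    exact (mul_eq_zero.mp h1).resolve_left (ne_of_gt hu)
  -- pair sum bound
  have hpair : ∀ u w : Fin n, u ≠ w → p u + p w ≤ 1 := by
    intro u w huw
    rw [← hp1, ← Finset.sum_pair huw]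
    exact Finset.sum_le_sum_of_subset_of_nonneg (Finset.subset_univ _)
      (fun i _ _ => hp0 i)
  -- an edge with equal positive masses
  obtain ⟨u0, v0, hadj, hpu0, hpv0, heq⟩ :
      ∃ u v, G.Adj u v ∧ 0 < p u ∧ 0 < p v ∧ p u = p v := by
    set T : Finset (Fin n) :=
      Finset.univ.filter (fun u => 0 < p u ∧ ∃ v, G.Adj u v ∧ 0 < p v) with hT
    obtain ⟨a, c, hac, hpa, hpc⟩ := hedge
    have hTne : T.Nonempty :=
      ⟨a, Finset.mem_filter.mpr ⟨Finset.mem_univ _, hpa, c, hac, hpc⟩⟩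
    obtain ⟨u0, hu0T, hmax⟩ := T.exists_max_image p hTne
    obtain ⟨hpu0, v0, hadj, hpv0⟩ := (Finset.mem_filter.mp hu0T).2
    have hv0T : v0 ∈ T := Finset.mem_filter.mpr
      ⟨Finset.mem_univ _, hpv0, u0, hadj.symm, hpu0⟩
    have hle : p v0 ≤ p u0 := hmax v0 hv0T
    have hnn : ∀ w ∈ G.neighborFinset u0, 0 ≤ p w * F u0 w (p u0 - p w) := by
      intro w hw
      rcases eq_or_lt_of_le (hp0 w) with h | h
      · rw [← h]; simp
      · have hwT : w ∈ T := Finset.mem_filter.mpr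
          ⟨Finset.mem_univ _, h, u0, (G.mem_neighborFinset u0 w |>.mp hw).symm, hpu0⟩
        have := hmax w hwT
        exact mul_nonneg (hp0 w) (hFnn _ _ _ (by linarith) (by linarith [hple1 u0]))
    have hz := (Finset.sum_eq_zero_iff_of_nonneg hnn).mp (hfix' u0 hpu0) v0
      ((G.mem_neighborFinset u0 v0).mpr hadj)
    have hF0 : F u0 v0 (p u0 - p v0) = 0 :=
      (mul_eq_zero.mp hz).resolve_left (ne_of_gt hpv0)
    have : p u0 = p v0 := by
      by_contra hne
      have hd : 0 < p u0 - p v0 := by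
        rcases lt_or_eq_of_le hle with h | h
        · linarith
        · exact absurd h.symm hne
      exact absurd hF0 (ne_of_gt (hFpos u0 v0 _ hd (by linarith [hple1 u0])))
    exact ⟨u0, v0, hadj, hpu0, hpv0, this⟩
  -- block structure
  set b : Fin n → ℕ := fun u => if 0 < p u then 0 else 1 with hb
  have hbS : ∀ u, b u = 0 ↔ 0 < p u := by
    intro u; by_cases h : 0 < p u <;> simp [hb, h]
  set Jc : Matrix (Fin n) (Fin n) ℂ := J.map Complex.ofReal with hJc
  have hBT : Jc.BlockTriangular b := by
    intro i j hij
    have hpi : ¬ 0 < p i := by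
      intro h
      have hbi0 : b i = 0 := by simp [hb, h]
      rw [hbi0] at hij
      exact absurd hij (Nat.not_lt_zero _)
    have hpi0 : p i = 0 := le_antisymm (not_lt.mp hpi) (hp0 i)
    have hne : i ≠ j := by intro h; subst h; exact absurd rfl (ne_of_gt hij)
    have hJ0 : J i j = 0 := by
      rw [hJ]
      by_cases hadj' : G.Adj i j <;> simp [hne, hadj', hpi0]
    simp [hJc, Matrix.map_apply, hJ0]
  -- the positive block
  set S : Finset (Fin n) := Finset.univ.filter (fun u => b u = 0) with hS
  have hu0S : u0 ∈ S := Finset.mem_filter.mpr ⟨Finset.mem_univ _, (hbS u0).mpr hpu0⟩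
  set A : Matrix {i // b i = 0} {i // b i = 0} ℂ := Jc.toSquareBlock b 0 with hA
  -- trace of the block
  have h2 : ∑ u ∈ S, ((J u u : ℝ) : ℂ) = ∑ u : {i // b i = 0}, ((J u.1 u.1 : ℝ) : ℂ) :=
    Finset.sum_subtype S (fun x => by simp [hS]) _
  have htrace : A.trace = ((∑ u ∈ S, J u u : ℝ) : ℂ) := by
    calc A.trace = ∑ u : {i // b i = 0}, ((J u.1 u.1 : ℝ) : ℂ) := by
          rw [Matrix.trace]
          apply Finset.sum_congr rfl
          intro u _
          simp [hA, Matrix.toSquareBlock_def, Matrix.diag, hJc, Matrix.map_apply]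
      _ = ∑ u ∈ S, ((J u u : ℝ) : ℂ) := h2.symm
      _ = ((∑ u ∈ S, J u u : ℝ) : ℂ) := by push_cast; rfl
  have hcardA : Fintype.card {i // b i = 0} = S.card := by
    rw [hS]; exact Fintype.card_subtype _
  -- each diagonal entry in the block
  have hsplit : ∀ u ∈ S, J u u = 1 +
      ∑ w ∈ G.neighborFinset u, p u * (p w * F' u w (p u - p w)) := by
    intro u hu
    have hpu : 0 < p u := (hbS u).mp (Finset.mem_filter.mp hu).2
    have hc : ∀ w ∈ G.neighborFinset u,
        p w * (F u w (p u - p w) + p u * F' u w (p u - p w))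
        = p w * F u w (p u - p w) + p u * (p w * F' u w (p u - p w)) := fun w _ => by ring
    rw [hJ, if_pos rfl, Finset.sum_congr rfl hc, Finset.sum_add_distrib, hfix' u hpu, zero_add]
  -- nonnegativity of the derivative terms
  have hinn : ∀ u ∈ S, ∀ w ∈ G.neighborFinset u,
      0 ≤ p u * (p w * F' u w (p u - p w)) := by
    intro u hu w hw
    rcases eq_or_lt_of_le (hp0 w) with h | h
    · rw [← h]; ring_nf; simp
    · have hpu : 0 < p u := (hbS u).mp (Finset.mem_filter.mp hu).2
      have hne : u ≠ w := ((G.mem_neighborFinset u w).mp hw).ne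
      have h1 := hpair u w hne
      have hF'nn : 0 ≤ F' u w (p u - p w) :=
        aux_deriv_nonneg (hderiv u w _) (hmono u w) (by linarith) (by linarith)
      exact mul_nonneg hpu.le (mul_nonneg h.le hF'nn)
  -- trace strictly exceeds dimension
  have hkey : (S.card : ℝ) < ∑ u ∈ S, J u u := by
    rw [Finset.sum_congr rfl hsplit, Finset.sum_add_distrib, Finset.sum_const,
      nsmul_eq_mul, mul_one]
    have hpos : 0 < ∑ u ∈ S, ∑ w ∈ G.neighborFinset u,
        p u * (p w * F' u w (p u - p w)) := by
      apply Finset.sum_pos'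
      · intro u hu
        exact Finset.sum_nonneg (hinn u hu)
      · refine ⟨u0, hu0S, Finset.sum_pos' (hinn u0 hu0S) ⟨v0,
          (G.mem_neighborFinset u0 v0).mpr hadj, ?_⟩⟩
        rw [show p u0 - p v0 = 0 by rw [heq, sub_self]]
        exact mul_pos hpu0 (mul_pos hpv0 (hF'0 u0 v0))
    linarith
  -- apply the trace bound to the block
  have hA_abs : (Fintype.card {i // b i = 0} : ℝ) < ‖A.trace‖ := by
    rw [htrace, Complex.norm_real, Real.norm_eq_abs, hcardA]
    calc (S.card : ℝ) < ∑ u ∈ S, J u u := hkey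
      _ ≤ |∑ u ∈ S, J u u| := le_abs_self _
  obtain ⟨μ, hroot, habs⟩ := aux_exists_big_root A hA_abs
  refine ⟨μ, ?_, habs⟩
  apply aux_root_mem_spectrum
  have hfact := hBT.charpoly
  rw [Polynomial.IsRoot, hfact, Polynomial.eval_prod]
  refine Finset.prod_eq_zero (i := (0 : ℕ)) ?_ ?_
  · exact Finset.mem_image.mpr ⟨u0, Finset.mem_univ _, (hbS u0).mpr hpu0⟩
  · rw [← hA]; exact hroot
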